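/- Let (A,·,r) be a quasitriangular anti-flexible bialgebra with r = Σ_i u_i⊗v_i, and let M be an A-bimodule with actions ▷: A⊗M→M and ◁: M⊗A→M. Define φ: M→A⊗M by φ(m) = Σ_i u_i⊗(m◁v_i) and ψ: M→M⊗A by ψ(m) = Σ_i (v_i▷m)⊗u_i. Then (M, ▷, ◁, φ, ψ) is an anti-flexible Hopf bimodule over the anti-flexible bialgebra (A, ·, Δ_r). -/

import Mathlib

open TensorProduct LinearMap

namespace AntiFlexible

section Basic

variable (K : Type*) [Field K] [CharZero K]
variable (M N P : Type*)
variable [AddCommGroup M] [Module K M] [AddCommGroup N] [Module K N] [AddCommGroup P] [Module K P]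

/-- The flip map `τ : M ⊗ N → N ⊗ M`. -/
noncomputable def τ : M ⊗[K] N →ₗ[K] N ⊗[K] M := (TensorProduct.comm K M N).toLinearMap

/-- `τ₁₃ : (M ⊗ N) ⊗ P → (P ⊗ N) ⊗ M`, exchanging the outer tensor factors. -/
noncomputable def τ₁₃ : (M ⊗[K] N) ⊗[K] P →ₗ[K] (P ⊗[K] N) ⊗[K] M :=
  (TensorProduct.assoc K P N M).symm.toLinearMap ∘ₗ
    (lTensor P (τ K M N)) ∘ₗ (TensorProduct.comm K (M ⊗[K] N) P).toLinearMap

/-- The reassociator `M ⊗ (N ⊗ P) → (M ⊗ N) ⊗ P`. -/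
noncomputable def α : M ⊗[K] (N ⊗[K] P) →ₗ[K] (M ⊗[K] N) ⊗[K] P :=
  (TensorProduct.assoc K M N P).symm.toLinearMap

/-- The antisymmetrizer `id - τ` on `M ⊗ M`. -/
noncomputable def ω : M ⊗[K] M →ₗ[K] M ⊗[K] M := LinearMap.id - τ K M M

end Basic

section Structures

variable {K : Type*} [Field K] [CharZero K]
variable {A H V : Type*}
variable [AddCommGroup A] [Module K A] [AddCommGroup H] [Module K H]
variable [AddCommGroup V] [Module K V]

/-- Anti-flexible algebra: `(ab)c - a(bc) = (cb)a - c(ba)`. -/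
def IsAFAlgebra (m : A →ₗ[K] A →ₗ[K] A) : Prop :=
  ∀ a b c, m (m a b) c - m a (m b c) = m (m c b) a - m c (m b a)

/-- The coassociativity defect `(Δ ⊗ id)Δ - (id ⊗ Δ)Δ`, viewed in `(A ⊗ A) ⊗ A`. -/
noncomputable def coassocDefect (Δ : A →ₗ[K] A ⊗[K] A) : A →ₗ[K] (A ⊗[K] A) ⊗[K] A :=
  (rTensor A Δ) ∘ₗ Δ - (α K A A A) ∘ₗ (lTensor A Δ) ∘ₗ Δ

/-- Anti-flexible coalgebra: the coassociativity defect is `τ₁₃`-invariant. -/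
def IsAFCoalgebra (Δ : A →ₗ[K] A ⊗[K] A) : Prop :=
  ∀ a, coassocDefect Δ a = τ₁₃ K A A A (coassocDefect Δ a)

/-- Anti-flexible bialgebra. -/
def IsAFBialgebra (m : A →ₗ[K] A →ₗ[K] A) (Δ : A →ₗ[K] A ⊗[K] A) : Prop :=
  IsAFAlgebra m ∧ IsAFCoalgebra Δ ∧
  (∀ a b, Δ (m a b) + τ K A A (Δ (m b a)) =
      rTensor A (m b) (τ K A A (Δ a)) + lTensor A (m.flip a) (τ K A A (Δ b))
      + rTensor A (m.flip b) (Δ a) + lTensor A (m a) (Δ b)) ∧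
  (∀ a b, ω K A (lTensor A (m.flip b) (Δ a) - rTensor A (m b) (Δ a)
      - lTensor A (m.flip a) (Δ b) + rTensor A (m a) (Δ b)) = 0)

/-- `V` is a bimodule over the anti-flexible algebra `(H, m)` via `tr = ▷` and `tl = ◁`. -/
def IsAFBimodule (m : H →ₗ[K] H →ₗ[K] H)
    (tr : H →ₗ[K] V →ₗ[K] V) (tl : V →ₗ[K] H →ₗ[K] V) : Prop :=
  (∀ x y v, tr (m x y) v - tr x (tr y v) = tl (tl v y) x - tl v (m y x)) ∧
  (∀ x y v, tl (tr x v) y - tr x (tl v y) = tl (tr y v) x - tr y (tl v x))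

/-- `V` is a bicomodule over the anti-flexible coalgebra `(H, Δ)` via `φ` and `ψ`. -/
def IsAFBicomodule (Δ : H →ₗ[K] H ⊗[K] H)
    (φ : V →ₗ[K] H ⊗[K] V) (ψ : V →ₗ[K] V ⊗[K] H) : Prop :=
  (∀ v, rTensor V Δ (φ v) - α K H H V (lTensor H φ (φ v))
      = τ₁₃ K V H H (rTensor H ψ (ψ v) - α K V H H (lTensor V Δ (ψ v)))) ∧
  (∀ v, rTensor H φ (ψ v) - α K H V H (lTensor H ψ (φ v))
      = τ₁₃ K H V H (rTensor H φ (ψ v) - α K H V H (lTensor H ψ (φ v))))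

/-- Anti-flexible Hopf bimodule over `(H, m, Δ)`, with conditions (HM1)-(HM3). -/
def IsAFHopfBimodule (m : H →ₗ[K] H →ₗ[K] H) (Δ : H →ₗ[K] H ⊗[K] H)
    (tr : H →ₗ[K] V →ₗ[K] V) (tl : V →ₗ[K] H →ₗ[K] V)
    (φ : V →ₗ[K] H ⊗[K] V) (ψ : V →ₗ[K] V ⊗[K] H) : Prop :=
  IsAFBimodule m tr tl ∧ IsAFBicomodule Δ φ ψ ∧
  -- (HM1)
  (∀ x v, φ (tr x v) + τ K V H (ψ (tl v x))
      = lTensor H (tr x) (φ v) + lTensor H (tl.flip x) (τ K V H (ψ v))) ∧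
  -- (HM2)
  (∀ x v, ψ (tr x v) + τ K H V (φ (tl v x))
      = rTensor H (tr.flip v) (Δ x) + lTensor V (m x) (ψ v)
      + lTensor V (m.flip x) (τ K H V (φ v)) + rTensor H (tl v) (τ K H H (Δ x))) ∧
  -- (HM3)
  (∀ x v, rTensor H (tr x) (ψ v) - rTensor H (tl v) (Δ x) - lTensor V (m.flip x) (ψ v)
      = τ K H V (- lTensor H (tl.flip x) (φ v) + rTensor V (m x) (φ v)
        + lTensor H (tr.flip v) (Δ x)))

/-- `A` is a braided anti-flexible bialgebra over `(H, mH, ΔH)`: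
an anti-flexible algebra and coalgebra in the category of anti-flexible Hopf bimodules,
satisfying (BB1) and (BB2). -/
def IsBraidedAFBialgebra (mA : A →ₗ[K] A →ₗ[K] A) (ΔA : A →ₗ[K] A ⊗[K] A)
    (mH : H →ₗ[K] H →ₗ[K] H) (ΔH : H →ₗ[K] H ⊗[K] H)
    (tr : H →ₗ[K] A →ₗ[K] A) (tl : A →ₗ[K] H →ₗ[K] A)
    (φ : A →ₗ[K] H ⊗[K] A) (ψ : A →ₗ[K] A ⊗[K] H) : Prop :=
  IsAFAlgebra mA ∧ IsAFCoalgebra ΔA ∧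
  IsAFHopfBimodule mH ΔH tr tl φ ψ ∧
  -- H-bimodule algebra
  (∀ x a b, mA (tr x a) b - tr x (mA a b) = tl (mA b a) x - mA b (tl a x)) ∧
  (∀ x a b, mA a (tr x b) - mA (tl a x) b = mA b (tr x a) - mA (tl b x) a) ∧
  -- H-bimodule coalgebra
  (∀ x b, ΔA (tr x b) + τ K A A (ΔA (tl b x))
      = lTensor A (tl.flip x) (τ K A A (ΔA b)) + lTensor A (tr x) (ΔA b)) ∧
  (∀ x b, ω K A (rTensor A (tr x) (ΔA b) - lTensor A (tl.flip x) (ΔA b)) = 0) ∧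
  -- H-bicomodule algebra
  (∀ a b, φ (mA a b) + τ K A H (ψ (mA b a))
      = lTensor H (mA a) (φ b) + lTensor H (mA.flip a) (τ K A H (ψ b))) ∧
  (∀ a b, lTensor H (mA.flip b) (φ a) - lTensor H (mA.flip a) (φ b)
      = τ K A H (rTensor H (mA a) (ψ b) - rTensor H (mA b) (ψ a))) ∧
  -- H-bicomodule coalgebra
  (∀ a, rTensor A φ (ΔA a) - α K H A A (lTensor H ΔA (φ a))
      = τ₁₃ K A A H (rTensor H ΔA (ψ a) - α K A A H (lTensor A ψ (ΔA a)))) ∧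
  (∀ a, rTensor A ψ (ΔA a) - α K A H A (lTensor A φ (ΔA a))
      = τ₁₃ K A H A (rTensor A ψ (ΔA a) - α K A H A (lTensor A φ (ΔA a)))) ∧
  -- (BB1)
  (∀ a b, ΔA (mA a b) + τ K A A (ΔA (mA b a))
      = rTensor A (mA.flip b) (ΔA a) + rTensor A (mA b) (τ K A A (ΔA a))
      + lTensor A (mA a) (ΔA b) + lTensor A (mA.flip a) (τ K A A (ΔA b))
      + rTensor A (tr.flip b) (φ a) + rTensor A (tl b) (τ K A H (ψ a))
      + lTensor A (tl a) (ψ b) + lTensor A (tr.flip a) (τ K H A (φ b))) ∧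
  -- (BB2)
  (∀ a b, ω K A (lTensor A (mA.flip b) (ΔA a) - rTensor A (mA b) (ΔA a)
        - lTensor A (mA.flip a) (ΔA b) + rTensor A (mA a) (ΔA b))
      + ω K A (lTensor A (tr.flip b) (ψ a) - rTensor A (tl b) (φ a)
        - lTensor A (tr.flip a) (ψ b) + rTensor A (tl a) (φ b)) = 0)

/-- The (cocycle) cross product multiplication on `A × H`:
`(a,x)(b,y) = (ab + x⇀b + a↼y + σ(x,y), xy + x◁b + a▷y + θ(a,b))`,
where `tr = ⇀`, `tl = ↼`, `sr = ▷`, `sl = ◁`. -/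
noncomputable def prodMul (mA : A →ₗ[K] A →ₗ[K] A) (mH : H →ₗ[K] H →ₗ[K] H)
    (tr : H →ₗ[K] A →ₗ[K] A) (tl : A →ₗ[K] H →ₗ[K] A)
    (sr : A →ₗ[K] H →ₗ[K] H) (sl : H →ₗ[K] A →ₗ[K] H)
    (σ : H →ₗ[K] H →ₗ[K] A) (θ : A →ₗ[K] A →ₗ[K] H) :
    (A × H) →ₗ[K] (A × H) →ₗ[K] (A × H) :=
  ((mA ∘ₗ fst K A H).compl₂ (fst K A H) + (tr ∘ₗ snd K A H).compl₂ (fst K A H)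
    + (tl ∘ₗ fst K A H).compl₂ (snd K A H)
    + (σ ∘ₗ snd K A H).compl₂ (snd K A H)).compr₂ (inl K A H)
  + ((mH ∘ₗ snd K A H).compl₂ (snd K A H) + (sl ∘ₗ snd K A H).compl₂ (fst K A H)
    + (sr ∘ₗ fst K A H).compl₂ (snd K A H)
    + (θ ∘ₗ fst K A H).compl₂ (fst K A H)).compr₂ (inr K A H)

/-- The (cycle) cross coproduct comultiplication on `A × H`:
`Δ(a) = Δ_A(a) + φ(a) + ψ(a) + P(a)` and `Δ(x) = Δ_H(x) + ρ(x) + γ(x) + Q(x)`. -/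
noncomputable def prodComul (ΔA : A →ₗ[K] A ⊗[K] A) (ΔH : H →ₗ[K] H ⊗[K] H)
    (φ : A →ₗ[K] H ⊗[K] A) (ψ : A →ₗ[K] A ⊗[K] H)
    (ρ : H →ₗ[K] A ⊗[K] H) (γ : H →ₗ[K] H ⊗[K] A)
    (P : A →ₗ[K] H ⊗[K] H) (Q : H →ₗ[K] A ⊗[K] A) :
    (A × H) →ₗ[K] (A × H) ⊗[K] (A × H) :=
  (TensorProduct.map (inl K A H) (inl K A H)) ∘ₗ ΔA ∘ₗ fst K A H
  + (TensorProduct.map (inr K A H) (inl K A H)) ∘ₗ φ ∘ₗ fst K A H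
  + (TensorProduct.map (inl K A H) (inr K A H)) ∘ₗ ψ ∘ₗ fst K A H
  + (TensorProduct.map (inr K A H) (inr K A H)) ∘ₗ P ∘ₗ fst K A H
  + (TensorProduct.map (inr K A H) (inr K A H)) ∘ₗ ΔH ∘ₗ snd K A H
  + (TensorProduct.map (inl K A H) (inr K A H)) ∘ₗ ρ ∘ₗ snd K A H
  + (TensorProduct.map (inr K A H) (inl K A H)) ∘ₗ γ ∘ₗ snd K A H
  + (TensorProduct.map (inl K A H) (inl K A H)) ∘ₗ Q ∘ₗ snd K A H

/-- The linear map `(a, x) ↦ (a + r(x), s(x))` on `A × V`. -/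
noncomputable def phiRS (r : V →ₗ[K] A) (s : V →ₗ[K] V) : (A × V) →ₗ[K] (A × V) :=
  (fst K A V + r ∘ₗ snd K A V).prod (s ∘ₗ snd K A V)

end Structures

end AntiFlexible

open AntiFlexible

private lemma skew_L {K A W : Type*} [Field K] [AddCommGroup A] [Module K A]
    [AddCommGroup W] [Module K W] {n : ℕ} {u v : Fin n → A}
    (h : (∑ i, v i ⊗ₜ[K] u i : A ⊗[K] A) = - ∑ i, u i ⊗ₜ[K] v i)
    (L : A ⊗[K] A →ₗ[K] W) :
    ∑ i, L (v i ⊗ₜ[K] u i) = - ∑ i, L (u i ⊗ₜ[K] v i) := by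
  have := congrArg L h
  simpa [map_sum] using this

private lemma grp_rearrange {G : Type*} [AddCommGroup G] {a b c d : G}
    (h : a - b = c - d) : b = a - c + d := by
  rw [sub_add, ← h, sub_sub_cancel]

set_option maxHeartbeats 4000000 in
/-- if `(A, m, r)` is a quasitriangular anti-flexible bialgebra with
`r = ∑ i, u i ⊗ v i` and `M` is an `A`-bimodule, then `M` with the coactions
`φ(w) = ∑ i, u i ⊗ (w ◁ v i)` and `ψ(w) = ∑ i, (v i ▷ w) ⊗ u i` is an anti-flexible
Hopf bimodule over `(A, m, Δ_r)`. -/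
theorem quasitriangular_hopf_bimodule
    (K A M : Type*) [Field K] [CharZero K]
    [AddCommGroup A] [Module K A] [AddCommGroup M] [Module K M]
    (m : A →ₗ[K] A →ₗ[K] A) (n : ℕ) (u v : Fin n → A)
    (tr : A →ₗ[K] M →ₗ[K] M) (tl : M →ₗ[K] A →ₗ[K] M)
    (halg : IsAFAlgebra m)
    (hskew : τ K A A (∑ i, u i ⊗ₜ[K] v i) = - ∑ i, u i ⊗ₜ[K] v i)
    (hAFYB : ∑ i, ∑ j, ((m (u i) (u j)) ⊗ₜ[K] (v i)) ⊗ₜ[K] (v j)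
      - ∑ i, ∑ j, ((u j) ⊗ₜ[K] (m (u i) (v j))) ⊗ₜ[K] (v i)
      + ∑ i, ∑ j, ((u i) ⊗ₜ[K] (u j)) ⊗ₜ[K] (m (v i) (v j)) = 0)
    (hbim : IsAFBimodule m tr tl) :
    IsAFHopfBimodule m
      (∑ i, ((TensorProduct.mk K A A (u i)) ∘ₗ (m.flip (v i))
        + ((TensorProduct.mk K A A).flip (u i)) ∘ₗ (m (v i))))
      tr tl
      (∑ i, (TensorProduct.mk K A M (u i)) ∘ₗ (tl.flip (v i)))
      (∑ i, ((TensorProduct.mk K M A).flip (u i)) ∘ₗ (tr (v i))) := by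
  obtain ⟨hb1, hb2⟩ := hbim
  have hskew' : (∑ i, v i ⊗ₜ[K] u i : A ⊗[K] A) = - ∑ i, u i ⊗ₜ[K] v i := by
    simpa [τ, map_sum] using hskew
  refine ⟨⟨hb1, hb2⟩, ⟨?_, ?_⟩, ?_, ?_, ?_⟩
  · -- bicomodule condition 1 (uses AFYB)
    intro w
    simp only [LinearMap.sum_apply, map_sum, coe_comp, Function.comp_apply,
      TensorProduct.mk_apply, flip_apply, lTensor_tmul, rTensor_tmul, τ, τ₁₃, α,
      LinearEquiv.coe_coe, TensorProduct.comm_tmul, TensorProduct.assoc_tmul,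
      TensorProduct.assoc_symm_tmul, LinearMap.add_apply, map_add, map_sub, LinearMap.sub_apply,
      TensorProduct.tmul_sum, TensorProduct.sum_tmul, TensorProduct.tmul_add, TensorProduct.add_tmul]
    -- T1 : image of AFYB under (x⊗y)⊗z ↦ (x⊗z)⊗(tr y w)
    have T1 : (∑ x : Fin n, ∑ x1 : Fin n, ((m (u x)) (u x1) ⊗ₜ[K] v x1) ⊗ₜ[K] (tr (v x)) w)
        - (∑ x : Fin n, ∑ x1 : Fin n, (u x1 ⊗ₜ[K] v x) ⊗ₜ[K] (tr ((m (u x)) (v x1))) w)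
        + (∑ x : Fin n, ∑ x1 : Fin n, (u x ⊗ₜ[K] (m (v x)) (v x1)) ⊗ₜ[K] (tr (u x1)) w) = 0 := by
      have := congrArg ((lTensor (A ⊗[K] A) (tr.flip w)) ∘ₗ
        ((TensorProduct.assoc K A A A).symm.toLinearMap) ∘ₗ (lTensor A (τ K A A)) ∘ₗ
        ((TensorProduct.assoc K A A A).toLinearMap)) hAFYB
      simpa [map_sum, τ, TensorProduct.assoc_tmul, TensorProduct.assoc_symm_tmul] using this
    -- T3 : image of AFYB under (x⊗y)⊗z ↦ (x⊗y)⊗(tl w z)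
    have T3 : (∑ x : Fin n, ∑ x1 : Fin n, ((m (u x)) (u x1) ⊗ₜ[K] v x) ⊗ₜ[K] (tl w) (v x1))
        - (∑ x : Fin n, ∑ x1 : Fin n, (u x1 ⊗ₜ[K] (m (u x)) (v x1)) ⊗ₜ[K] (tl w) (v x))
        + (∑ x : Fin n, ∑ x1 : Fin n, (u x ⊗ₜ[K] u x1) ⊗ₜ[K] (tl w) ((m (v x)) (v x1))) = 0 := by
      have := congrArg (lTensor (A ⊗[K] A) (tl w)) hAFYB
      simpa [map_sum] using this
    -- comm the first sum of T3 and the second sum of T1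
    rw [show (∑ x : Fin n, ∑ x1 : Fin n, ((m (u x)) (u x1) ⊗ₜ[K] v x) ⊗ₜ[K] (tl w) (v x1))
        = ∑ x : Fin n, ∑ x1 : Fin n, ((m (u x1)) (u x) ⊗ₜ[K] v x1) ⊗ₜ[K] (tl w) (v x)
        from Finset.sum_comm] at T3
    rw [show (∑ x : Fin n, ∑ x1 : Fin n, (u x1 ⊗ₜ[K] v x) ⊗ₜ[K] (tr ((m (u x)) (v x1))) w)
        = ∑ x : Fin n, ∑ x1 : Fin n, (u x ⊗ₜ[K] v x1) ⊗ₜ[K] (tr ((m (u x1)) (v x))) w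
        from Finset.sum_comm] at T1
    rw [sub_add, sub_eq_zero] at T1 T3
    -- key1 : pointwise hb1 on the first RHS sum
    have key1 : (∑ x : Fin n, ∑ x1 : Fin n, (u x ⊗ₜ[K] u x1) ⊗ₜ[K] (tr (v x1)) ((tr (v x)) w))
        = ∑ x : Fin n, ∑ x1 : Fin n, (u x ⊗ₜ[K] u x1) ⊗ₜ[K]
            ((tr ((m (v x1)) (v x))) w - (tl ((tl w) (v x))) (v x1) + (tl w) ((m (v x)) (v x1))) := by
      refine Finset.sum_congr rfl fun x _ => Finset.sum_congr rfl fun y _ => ?_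
      congr 1
      exact grp_rearrange (hb1 (v y) (v x) w)
    -- skew rewrites
    have hB : (∑ x : Fin n, ∑ x1 : Fin n, ((m (u x)) (v x1) ⊗ₜ[K] u x1) ⊗ₜ[K] (tr (v x)) w)
        = - ∑ x : Fin n, ∑ x1 : Fin n, ((m (u x)) (u x1) ⊗ₜ[K] v x1) ⊗ₜ[K] (tr (v x)) w := by
      rw [← Finset.sum_neg_distrib]
      refine Finset.sum_congr rfl fun x _ => ?_
      simpa using skew_L hskew' (((TensorProduct.mk K (A ⊗[K] A) M).flip ((tr (v x)) w)) ∘ₗ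
        TensorProduct.map ((m (u x))) LinearMap.id)
    have hC : (∑ x : Fin n, ∑ x1 : Fin n, (u x1 ⊗ₜ[K] (m (v x1)) (u x)) ⊗ₜ[K] (tr (v x)) w)
        = - ∑ x : Fin n, ∑ x1 : Fin n, (u x ⊗ₜ[K] (m (v x)) (v x1)) ⊗ₜ[K] (tr (u x1)) w := by
      rw [show (∑ x : Fin n, ∑ x1 : Fin n, (u x1 ⊗ₜ[K] (m (v x1)) (u x)) ⊗ₜ[K] (tr (v x)) w)
          = ∑ x : Fin n, ∑ x1 : Fin n, (u x ⊗ₜ[K] (m (v x)) (u x1)) ⊗ₜ[K] (tr (v x1)) w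
          from Finset.sum_comm]
      rw [← Finset.sum_neg_distrib]
      refine Finset.sum_congr rfl fun x _ => ?_
      have h := skew_L hskew' (TensorProduct.map ((TensorProduct.mk K A A (u x)) ∘ₗ (m (v x))) (tr.flip w))
      simp only [TensorProduct.map_tmul, coe_comp, Function.comp_apply, TensorProduct.mk_apply,
        flip_apply] at h
      rw [h, neg_neg]
    have hSa : (∑ x : Fin n, ∑ x1 : Fin n, (u x ⊗ₜ[K] u x1) ⊗ₜ[K] (tr ((m (v x1)) (v x))) w)
        = - ∑ x : Fin n, ∑ x1 : Fin n, (u x ⊗ₜ[K] v x1) ⊗ₜ[K] (tr ((m (u x1)) (v x))) w := by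
      rw [← Finset.sum_neg_distrib]
      refine Finset.sum_congr rfl fun x _ => ?_
      have h := skew_L hskew' (TensorProduct.map (TensorProduct.mk K A A (u x)) (tr.flip w ∘ₗ m.flip (v x)))
      simp only [TensorProduct.map_tmul, coe_comp, Function.comp_apply, TensorProduct.mk_apply,
        flip_apply] at h
      rw [h, neg_neg]
    have hF : (∑ x : Fin n, ∑ x1 : Fin n, ((m (v x1)) (u x) ⊗ₜ[K] u x1) ⊗ₜ[K] (tl w) (v x))
        = - ∑ x : Fin n, ∑ x1 : Fin n, ((m (u x1)) (u x) ⊗ₜ[K] v x1) ⊗ₜ[K] (tl w) (v x) := by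
      rw [← Finset.sum_neg_distrib]
      refine Finset.sum_congr rfl fun x _ => ?_
      simpa using skew_L hskew' (((TensorProduct.mk K (A ⊗[K] A) M).flip ((tl w) (v x))) ∘ₗ
        TensorProduct.map (m.flip (u x)) LinearMap.id)
    rw [key1]
    simp only [TensorProduct.tmul_sub, TensorProduct.tmul_add, Finset.sum_sub_distrib,
      Finset.sum_add_distrib]
    rw [hB, hC, hSa, hF, T1, T3]
    abel
  · -- bicomodule condition 2 (pointwise hb2)
    intro w
    simp only [LinearMap.sum_apply, map_sum, coe_comp, Function.comp_apply,
      TensorProduct.mk_apply, flip_apply, lTensor_tmul, rTensor_tmul, τ, τ₁₃, α,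
      LinearEquiv.coe_coe, TensorProduct.comm_tmul, TensorProduct.assoc_tmul,
      TensorProduct.assoc_symm_tmul, LinearMap.add_apply, map_add, map_sub, LinearMap.sub_apply,
      TensorProduct.tmul_sum, TensorProduct.sum_tmul, TensorProduct.tmul_add, TensorProduct.add_tmul]
    rw [sub_eq_sub_iff_add_eq_add]
    have hc1 : (∑ x : Fin n, ∑ x1 : Fin n, (u x ⊗ₜ[K] (tr (v x1)) ((tl w) (v x))) ⊗ₜ[K] u x1)
        = ∑ x : Fin n, ∑ x1 : Fin n, (u x1 ⊗ₜ[K] (tr (v x)) ((tl w) (v x1))) ⊗ₜ[K] u x :=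
      Finset.sum_comm
    have hc2 : (∑ x : Fin n, ∑ x1 : Fin n, (u x ⊗ₜ[K] (tl ((tr (v x)) w)) (v x1)) ⊗ₜ[K] u x1)
        = ∑ x : Fin n, ∑ x1 : Fin n, (u x1 ⊗ₜ[K] (tl ((tr (v x1)) w)) (v x)) ⊗ₜ[K] u x :=
      Finset.sum_comm
    rw [hc1, hc2, ← Finset.sum_add_distrib, ← Finset.sum_add_distrib]
    refine Finset.sum_congr rfl fun x _ => ?_
    rw [← Finset.sum_add_distrib, ← Finset.sum_add_distrib]
    refine Finset.sum_congr rfl fun y _ => ?_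
    rw [← TensorProduct.add_tmul, ← TensorProduct.add_tmul, ← TensorProduct.tmul_add,
      ← TensorProduct.tmul_add]
    have h := hb2 (v x) (v y) w
    rw [sub_eq_sub_iff_add_eq_add] at h
    rw [h]
  · -- HM1
    intro x w
    simp only [LinearMap.sum_apply, map_sum, coe_comp, Function.comp_apply,
      TensorProduct.mk_apply, flip_apply, lTensor_tmul, τ, LinearEquiv.coe_coe,
      TensorProduct.comm_tmul, LinearMap.add_apply]
    rw [← Finset.sum_add_distrib, ← Finset.sum_add_distrib]
    refine Finset.sum_congr rfl fun i _ => ?_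
    rw [← TensorProduct.tmul_add, ← TensorProduct.tmul_add]
    congr 1
    have h := hb2 x (v i) w
    rw [sub_eq_sub_iff_add_eq_add] at h
    rw [h]; abel
  · -- HM2
    intro x w
    simp only [LinearMap.sum_apply, map_sum, coe_comp, Function.comp_apply,
      TensorProduct.mk_apply, flip_apply, lTensor_tmul, rTensor_tmul, τ, LinearEquiv.coe_coe,
      TensorProduct.comm_tmul, LinearMap.add_apply, map_add]
    have key1 : (∑ i, (tr (v i)) ((tr x) w) ⊗ₜ[K] u i)
        = ∑ i, ((tr ((m (v i)) x)) w - (tl ((tl w) x)) (v i) + (tl w) ((m x) (v i))) ⊗ₜ[K] u i := by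
      refine Finset.sum_congr rfl fun i _ => ?_
      congr 1
      exact grp_rearrange (hb1 (v i) x w)
    have h1 : (∑ i, (tr (v i)) w ⊗ₜ[K] (m x) (u i) : M ⊗[K] A)
        = - ∑ i, (tr (u i)) w ⊗ₜ[K] (m x) (v i) := by
      simpa using skew_L hskew' (TensorProduct.map (tr.flip w) (m x))
    have h2 : (∑ i, (tl w) (v i) ⊗ₜ[K] (m (u i)) x : M ⊗[K] A)
        = - ∑ i, (tl w) (u i) ⊗ₜ[K] (m (v i)) x := by
      simpa using skew_L hskew' (TensorProduct.map (tl w) (m.flip x))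
    rw [key1, Finset.sum_add_distrib, Finset.sum_add_distrib, h1, h2]
    simp only [TensorProduct.sub_tmul, TensorProduct.add_tmul, Finset.sum_add_distrib,
      Finset.sum_sub_distrib]
    abel
  · -- HM3
    intro x w
    simp only [LinearMap.sum_apply, map_sum, coe_comp, Function.comp_apply,
      TensorProduct.mk_apply, flip_apply, lTensor_tmul, rTensor_tmul, τ, LinearEquiv.coe_coe,
      TensorProduct.comm_tmul, LinearMap.add_apply, map_add, map_neg, map_sub, LinearMap.neg_apply]
    have key1 : (∑ i, (tr x) ((tr (v i)) w) ⊗ₜ[K] u i)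
        = ∑ i, ((tr ((m x) (v i))) w - (tl ((tl w) (v i))) x + (tl w) ((m (v i)) x)) ⊗ₜ[K] u i := by
      refine Finset.sum_congr rfl fun i _ => ?_
      congr 1
      exact grp_rearrange (hb1 x (v i) w)
    have h1 : (∑ i, (tl w) (v i) ⊗ₜ[K] (m x) (u i) : M ⊗[K] A)
        = - ∑ i, (tl w) (u i) ⊗ₜ[K] (m x) (v i) := by
      simpa using skew_L hskew' (TensorProduct.map (tl w) (m x))
    have h2 : (∑ i, (tr (v i)) w ⊗ₜ[K] (m (u i)) x : M ⊗[K] A)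
        = - ∑ i, (tr (u i)) w ⊗ₜ[K] (m (v i)) x := by
      simpa using skew_L hskew' (TensorProduct.map (tr.flip w) (m.flip x))
    rw [key1, Finset.sum_add_distrib, Finset.sum_add_distrib, h1, h2]
    simp only [TensorProduct.sub_tmul, TensorProduct.add_tmul, Finset.sum_add_distrib,
      Finset.sum_sub_distrib]
    abel
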